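/- For m = 1, the polynomial P(γ) = 25γ⁵ − 245γ⁴ − 546γ³ + 5016γ² − 15625γ + 15625 has exactly one real root in the interval (1,2], and this root lies in (79/50, 159/100). -/

import Mathlib

private noncomputable def qf : ℝ → ℝ := fun γ =>
  25 * γ ^ 5 - 245 * γ ^ 4 - 546 * γ ^ 3 + 5016 * γ ^ 2 - 15625 * γ + 15625

private lemma qf_deriv (x : ℝ) :
    HasDerivAt qf (125*x^4 - 980*x^3 - 1638*x^2 + 10032*x - 15625) x := by
  have h := (((((((hasDerivAt_pow 5 x).const_mul (25:ℝ)).sub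
      ((hasDerivAt_pow 4 x).const_mul 245)).sub
      ((hasDerivAt_pow 3 x).const_mul 546)).add
      ((hasDerivAt_pow 2 x).const_mul 5016)).sub
      ((hasDerivAt_id x).const_mul 15625)).add_const 15625)
  have h2 : (fun y : ℝ => 25 * y ^ 5 - 245 * y ^ 4 - 546 * y ^ 3 + 5016 * y ^ 2
      - 15625 * id y + 15625) = qf := by
    funext y; simp [qf]
  replace h : HasDerivAt (fun y : ℝ => 25 * y ^ 5 - 245 * y ^ 4 - 546 * y ^ 3 + 5016 * y ^ 2
      - 15625 * id y + 15625) _ x := h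
  rw [h2] at h
  convert h using 1
  push_cast
  ring

private lemma qf_anti : StrictAntiOn qf (Set.Icc 1 2) := by
  apply strictAntiOn_of_deriv_neg (convex_Icc 1 2)
  · exact Continuous.continuousOn (by unfold qf; continuity)
  · intro x hx
    rw [interior_Icc] at hx
    rw [(qf_deriv x).deriv]
    nlinarith [mul_nonneg (sub_nonneg.2 hx.1.le) (sub_nonneg.2 hx.2.le), sq_nonneg (x-1),
      sq_nonneg (2-x), mul_nonneg (mul_nonneg (sub_nonneg.2 hx.1.le) (sub_nonneg.2 hx.2.le))
      (sub_nonneg.2 hx.2.le), sq_nonneg x]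

/-- The polynomial `25γ⁵ − 245γ⁴ − 546γ³ + 5016γ² − 15625γ + 15625` has exactly one
real root in `(1,2]`, and this root lies in `(79/50, 159/100)`. -/
theorem quintic_unique_root :
    (∃! γ : ℝ, γ ∈ Set.Ioc (1 : ℝ) 2 ∧
      25 * γ ^ 5 - 245 * γ ^ 4 - 546 * γ ^ 3 + 5016 * γ ^ 2 - 15625 * γ + 15625 = 0) ∧
    (∀ γ : ℝ, γ ∈ Set.Ioc (1 : ℝ) 2 →
      25 * γ ^ 5 - 245 * γ ^ 4 - 546 * γ ^ 3 + 5016 * γ ^ 2 - 15625 * γ + 15625 = 0 →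
      79 / 50 < γ ∧ γ < 159 / 100) := by
  have hcont : ContinuousOn qf (Set.Icc (79/50 : ℝ) (159/100)) :=
    Continuous.continuousOn (by unfold qf; continuity)
  have hle : (79/50 : ℝ) ≤ 159/100 := by norm_num
  have hmem : (0 : ℝ) ∈ Set.Ioo (qf (159/100)) (qf (79/50)) := by
    constructor <;> · unfold qf; norm_num
  obtain ⟨γ₀, hγ₀mem, hγ₀⟩ := intermediate_value_Ioo' hle hcont hmem
  have hsub : Set.Ioc (1:ℝ) 2 ⊆ Set.Icc 1 2 := Set.Ioc_subset_Icc_self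
  have hγ₀Ioc : γ₀ ∈ Set.Ioc (1:ℝ) 2 := ⟨by linarith [hγ₀mem.1], by linarith [hγ₀mem.2]⟩
  have huniq : ∀ γ ∈ Set.Ioc (1:ℝ) 2, qf γ = 0 → γ = γ₀ := by
    intro γ hγ h
    exact qf_anti.injOn (hsub hγ) (hsub hγ₀Ioc) (by rw [h, hγ₀])
  constructor
  · exact ⟨γ₀, ⟨hγ₀Ioc, hγ₀⟩, fun γ ⟨h1, h2⟩ => huniq γ h1 h2⟩
  · intro γ hγ h
    have := huniq γ hγ h
    subst this
    exact ⟨hγ₀mem.1, hγ₀mem.2⟩
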